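/- Let (Φ, Ψ) be a random pair in ℝ^m × ℝ^n with strictly positive joint density p(φ, ψ) and marginal density q(ψ) = ∫ p(φ, ψ) dφ of Ψ, where ψ ↦ p(φ, ψ) is differentiable for each φ and differentiation under the integral is valid (∇q(ψ) = ∫ ∇_ψ p(φ, ψ) dφ for all ψ). Assume E‖∇_ψ log p(Φ, Ψ)‖² < ∞ and E‖∇ log q(Ψ)‖² < ∞. Then for every measurable s : ℝ^n → ℝ^n with E‖s(Ψ)‖² < ∞, E‖s(Ψ) − ∇_ψ log p(Φ, Ψ)‖² = E‖s(Ψ) − ∇ log q(Ψ)‖² + E‖∇ log q(Ψ) − ∇_ψ log p(Φ, Ψ)‖². In particular, the denoising score matching objective E‖s(Ψ) − ∇_ψ log p(Φ, Ψ)‖² is minimized exactly by s(ψ) = ∇ log q(ψ) (uniquely up to modification on a q-null set), i.e. the population optimum of denoising score matching with the conditional score as target equals the marginal score. -/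

import Mathlib

open MeasureTheory Filter Topology
open scoped NNReal ENNReal

/-- Joint measurability of the parametrized gradient, obtained as a pointwise
limit of difference quotients. -/
theorem aux_g_meas {m n : ℕ}
    (p : EuclideanSpace ℝ (Fin m) → EuclideanSpace ℝ (Fin n) → ℝ)
    (hp_meas : Measurable fun x : EuclideanSpace ℝ (Fin m) × EuclideanSpace ℝ (Fin n) => p x.1 x.2)
    (g : EuclideanSpace ℝ (Fin m) → EuclideanSpace ℝ (Fin n) → EuclideanSpace ℝ (Fin n))
    (hg : ∀ φ ψ, HasGradientAt (fun ψ' => p φ ψ') (g φ ψ) ψ) :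
    Measurable fun x : EuclideanSpace ℝ (Fin m) × EuclideanSpace ℝ (Fin n) => g x.1 x.2 := by
  refine (WithLp.measurable_toLp 2 _).comp (f := fun x : EuclideanSpace ℝ (Fin m) × EuclideanSpace ℝ (Fin n) => WithLp.ofLp (g x.1 x.2)) ?_
  rw [measurable_pi_iff]
  intro i
  set F : ℕ → EuclideanSpace ℝ (Fin m) × EuclideanSpace ℝ (Fin n) → ℝ :=
    fun k x => (k : ℝ) * (p x.1 (x.2 + (k : ℝ)⁻¹ • EuclideanSpace.single i (1:ℝ)) - p x.1 x.2)
    with hF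
  have hFm : ∀ k, Measurable (F k) := fun k =>
    ((hp_meas.comp ((measurable_fst).prodMk
      ((measurable_snd).add_const _))).sub hp_meas).const_mul _
  have key : ∀ x : EuclideanSpace ℝ (Fin m) × EuclideanSpace ℝ (Fin n),
      Tendsto (fun k : ℕ => F k x) atTop (𝓝 (g x.1 x.2 i)) := by
    intro x
    have h1 := (hg x.1 x.2).hasFDerivAt.lim (EuclideanSpace.single i (1:ℝ))
      (c := fun k : ℕ => (k : ℝ)) (l := atTop) ?_
    · have h2 : ((InnerProductSpace.toDual ℝ _) (g x.1 x.2)) (EuclideanSpace.single i (1:ℝ))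
          = g x.1 x.2 i := by
        simp [InnerProductSpace.toDual_apply_apply, EuclideanSpace.inner_single_right]
      rw [h2] at h1
      simpa [hF, smul_eq_mul] using h1
    · simpa using tendsto_natCast_atTop_atTop (R := ℝ)
  exact measurable_of_tendsto_metrizable' atTop hFm (tendsto_pi_nhds.2 key)

/-- Abstract `L²` Pythagoras identity: if the cross term vanishes, the squared
distance to `C` decomposes orthogonally through `B`, with the corresponding
minimality and uniqueness statements. -/
theorem pythagoras_aux {Ω : Type*} [MeasurableSpace Ω] (P : Measure Ω)
    {F : Type*} [NormedAddCommGroup F] [InnerProductSpace ℝ F]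
    (A B C : Ω → F)
    (hA : AEStronglyMeasurable A P) (hB : AEStronglyMeasurable B P)
    (hC : AEStronglyMeasurable C P)
    (hA2 : Integrable (fun ω => ‖A ω‖ ^ 2) P)
    (hB2 : Integrable (fun ω => ‖B ω‖ ^ 2) P)
    (hC2 : Integrable (fun ω => ‖C ω‖ ^ 2) P)
    (hT : ∫ ω, (inner ℝ (A ω - B ω) (B ω - C ω) : ℝ) ∂P = 0) :
    (∫ ω, ‖A ω - C ω‖ ^ 2 ∂P)
        = (∫ ω, ‖A ω - B ω‖ ^ 2 ∂P) + (∫ ω, ‖B ω - C ω‖ ^ 2 ∂P)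
    ∧ (∫ ω, ‖B ω - C ω‖ ^ 2 ∂P) ≤ (∫ ω, ‖A ω - C ω‖ ^ 2 ∂P)
    ∧ ((∫ ω, ‖A ω - C ω‖ ^ 2 ∂P) = (∫ ω, ‖B ω - C ω‖ ^ 2 ∂P) ↔ A =ᵐ[P] B) := by
  have sqmeas : ∀ (u v : Ω → F), AEStronglyMeasurable u P → AEStronglyMeasurable v P →
      AEStronglyMeasurable (fun ω => ‖u ω - v ω‖ ^ 2) P := fun u v hu hv =>
    ((hu.sub hv).norm).pow 2
  have sqint : ∀ (u v : Ω → F), AEStronglyMeasurable u P → AEStronglyMeasurable v P →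
      Integrable (fun ω => ‖u ω‖ ^ 2) P → Integrable (fun ω => ‖v ω‖ ^ 2) P →
      Integrable (fun ω => ‖u ω - v ω‖ ^ 2) P := by
    intro u v hu hv hu2 hv2
    have hbd : Integrable (fun ω => 2 * (‖u ω‖ ^ 2 + ‖v ω‖ ^ 2)) P := (hu2.add hv2).const_mul 2
    refine Integrable.mono' hbd (sqmeas u v hu hv) ?_
    filter_upwards with ω
    have h1 : ‖u ω - v ω‖ ≤ ‖u ω‖ + ‖v ω‖ := norm_sub_le _ _
    have h2 : (0:ℝ) ≤ ‖u ω - v ω‖ := norm_nonneg _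
    rw [Real.norm_eq_abs, abs_of_nonneg (by positivity)]
    nlinarith [norm_nonneg (u ω), norm_nonneg (v ω), mul_self_le_mul_self h2 h1,
      sq_nonneg (‖u ω‖ - ‖v ω‖)]
  have hAB2 := sqint A B hA hB hA2 hB2
  have hBC2 := sqint B C hB hC hB2 hC2
  have hinner : Integrable (fun ω => (inner ℝ (A ω - B ω) (B ω - C ω) : ℝ)) P := by
    have hbd : Integrable (fun ω => ‖A ω - B ω‖ ^ 2 + ‖B ω - C ω‖ ^ 2) P := hAB2.add hBC2
    refine Integrable.mono' hbd ((hA.sub hB).inner (hB.sub hC)) ?_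
    filter_upwards with ω
    have h1 := abs_real_inner_le_norm (A ω - B ω) (B ω - C ω)
    rw [Real.norm_eq_abs]
    nlinarith [norm_nonneg (A ω - B ω), norm_nonneg (B ω - C ω),
      sq_nonneg (‖A ω - B ω‖ - ‖B ω - C ω‖)]
  have hpt : ∀ ω, ‖A ω - C ω‖ ^ 2
      = ‖A ω - B ω‖ ^ 2 + 2 * (inner ℝ (A ω - B ω) (B ω - C ω) : ℝ) + ‖B ω - C ω‖ ^ 2 := by
    intro ω
    have := norm_add_sq_real (A ω - B ω) (B ω - C ω)
    rwa [sub_add_sub_cancel] at this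
  have key : (∫ ω, ‖A ω - C ω‖ ^ 2 ∂P)
      = (∫ ω, ‖A ω - B ω‖ ^ 2 ∂P) + (∫ ω, ‖B ω - C ω‖ ^ 2 ∂P) := by
    calc (∫ ω, ‖A ω - C ω‖ ^ 2 ∂P)
        = ∫ ω, (‖A ω - B ω‖ ^ 2 + 2 * (inner ℝ (A ω - B ω) (B ω - C ω) : ℝ)
            + ‖B ω - C ω‖ ^ 2) ∂P := by
          exact integral_congr_ae (Eventually.of_forall hpt)
      _ = (∫ ω, ‖A ω - B ω‖ ^ 2 ∂P) + 2 * (∫ ω, (inner ℝ (A ω - B ω) (B ω - C ω) : ℝ) ∂P)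
            + (∫ ω, ‖B ω - C ω‖ ^ 2 ∂P) := by
          have e1 : Integrable (fun ω => ‖A ω - B ω‖ ^ 2
              + 2 * (inner ℝ (A ω - B ω) (B ω - C ω) : ℝ)) P := hAB2.add (hinner.const_mul 2)
          rw [integral_add e1 hBC2, integral_add hAB2 (hinner.const_mul 2), integral_const_mul]
      _ = (∫ ω, ‖A ω - B ω‖ ^ 2 ∂P) + (∫ ω, ‖B ω - C ω‖ ^ 2 ∂P) := by rw [hT]; ring
  have hABnonneg : 0 ≤ ∫ ω, ‖A ω - B ω‖ ^ 2 ∂P :=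
    integral_nonneg fun ω => by positivity
  refine ⟨key, by linarith, ?_⟩
  constructor
  · intro h
    have h0 : (∫ ω, ‖A ω - B ω‖ ^ 2 ∂P) = 0 := by linarith
    have := (integral_eq_zero_iff_of_nonneg (fun ω => by positivity) hAB2).mp h0
    filter_upwards [this] with ω hω
    have h1 : ‖A ω - B ω‖ ^ 2 = 0 := hω
    have h2 : A ω - B ω = 0 := by
      simpa [pow_eq_zero_iff, norm_eq_zero] using h1
    exact sub_eq_zero.mp h2
  · intro h
    have h0 : (∫ ω, ‖A ω - B ω‖ ^ 2 ∂P) = 0 := by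
      rw [integral_eq_zero_iff_of_nonneg (fun ω => by positivity) hAB2]
      filter_upwards [h] with ω hω
      simp [hω]
    linarith

/-- Population optimum of denoising score matching: let `(Φ, Ψ)` be a random
pair in `ℝ^m × ℝ^n` with strictly positive joint density `p` (w.r.t. Lebesgue
measure) and marginal density `q ψ = ∫ p(φ, ψ) dφ` of `Ψ`, where `ψ ↦ p(φ, ψ)`
has gradient `g φ ψ` and differentiation under the integral is valid.  Assume
the joint score `(φ,ψ) ↦ (p φ ψ)⁻¹ • g φ ψ` and the marginal score
`ψ ↦ (q ψ)⁻¹ • ∫ g(φ,ψ) dφ` are square integrable.  Then for every measurable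
square-integrable `s : ℝ^n → ℝ^n`,
`E‖s(Ψ) − ∇_ψ log p(Φ,Ψ)‖² = E‖s(Ψ) − ∇ log q(Ψ)‖² + E‖∇ log q(Ψ) − ∇_ψ log p(Φ,Ψ)‖²`;
in particular the objective is minimized by `s = ∇ log q`, uniquely up to
modification on a null set of the law of `Ψ`. -/
theorem denoising_score_matching_population_optimum
    {m n : ℕ} {Ω : Type*} [MeasurableSpace Ω]
    (P : Measure Ω) [IsProbabilityMeasure P]
    (Φ : Ω → EuclideanSpace ℝ (Fin m)) (Ψ : Ω → EuclideanSpace ℝ (Fin n))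
    (hΦ : Measurable Φ) (hΨ : Measurable Ψ)
    (p : EuclideanSpace ℝ (Fin m) → EuclideanSpace ℝ (Fin n) → ℝ)
    (hp_meas : Measurable fun x : EuclideanSpace ℝ (Fin m) × EuclideanSpace ℝ (Fin n) => p x.1 x.2)
    (hp_pos : ∀ φ ψ, 0 < p φ ψ)
    (hlaw : P.map (fun ω => (Φ ω, Ψ ω))
        = volume.withDensity fun x : EuclideanSpace ℝ (Fin m) × EuclideanSpace ℝ (Fin n) =>
            ENNReal.ofReal (p x.1 x.2))
    (q : EuclideanSpace ℝ (Fin n) → ℝ)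
    (hp_int : ∀ ψ, Integrable (fun φ => p φ ψ))
    (hq_def : ∀ ψ, q ψ = ∫ φ, p φ ψ)
    (g : EuclideanSpace ℝ (Fin m) → EuclideanSpace ℝ (Fin n) → EuclideanSpace ℝ (Fin n))
    (hg : ∀ φ ψ, HasGradientAt (fun ψ' => p φ ψ') (g φ ψ) ψ)
    (hg_int : ∀ ψ, Integrable (fun φ => g φ ψ))
    (hq_grad : ∀ ψ, HasGradientAt q (∫ φ, g φ ψ) ψ)
    (hjoint_sq : Integrable (fun ω => ‖(p (Φ ω) (Ψ ω))⁻¹ • g (Φ ω) (Ψ ω)‖ ^ 2) P)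
    (hmarg_sq : Integrable (fun ω => ‖(q (Ψ ω))⁻¹ • ∫ φ, g φ (Ψ ω)‖ ^ 2) P)
    (s : EuclideanSpace ℝ (Fin n) → EuclideanSpace ℝ (Fin n))
    (hs_meas : Measurable s)
    (hs_sq : Integrable (fun ω => ‖s (Ψ ω)‖ ^ 2) P) :
    (∫ ω, ‖s (Ψ ω) - (p (Φ ω) (Ψ ω))⁻¹ • g (Φ ω) (Ψ ω)‖ ^ 2 ∂P)
        = (∫ ω, ‖s (Ψ ω) - (q (Ψ ω))⁻¹ • ∫ φ, g φ (Ψ ω)‖ ^ 2 ∂P)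
          + (∫ ω, ‖(q (Ψ ω))⁻¹ • (∫ φ, g φ (Ψ ω)) - (p (Φ ω) (Ψ ω))⁻¹ • g (Φ ω) (Ψ ω)‖ ^ 2 ∂P)
    ∧ (∫ ω, ‖(q (Ψ ω))⁻¹ • (∫ φ, g φ (Ψ ω)) - (p (Φ ω) (Ψ ω))⁻¹ • g (Φ ω) (Ψ ω)‖ ^ 2 ∂P)
        ≤ (∫ ω, ‖s (Ψ ω) - (p (Φ ω) (Ψ ω))⁻¹ • g (Φ ω) (Ψ ω)‖ ^ 2 ∂P)
    ∧ ((∫ ω, ‖s (Ψ ω) - (p (Φ ω) (Ψ ω))⁻¹ • g (Φ ω) (Ψ ω)‖ ^ 2 ∂P)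
          = (∫ ω, ‖(q (Ψ ω))⁻¹ • (∫ φ, g φ (Ψ ω)) - (p (Φ ω) (Ψ ω))⁻¹ • g (Φ ω) (Ψ ω)‖ ^ 2 ∂P)
        ↔ s =ᵐ[P.map Ψ] fun ψ => (q ψ)⁻¹ • ∫ φ, g φ ψ) := by
  classical
  -- basic measurability and positivity facts
  have hg_meas : Measurable fun x : EuclideanSpace ℝ (Fin m) × EuclideanSpace ℝ (Fin n) =>
      g x.1 x.2 := aux_g_meas p hp_meas g hg
  have hq_pos : ∀ ψ, 0 < q ψ := by
    intro ψ
    rw [hq_def]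
    rw [integral_pos_iff_support_of_nonneg (fun φ => (hp_pos φ ψ).le) (hp_int ψ)]
    have hsupp : Function.support (fun φ => p φ ψ) = Set.univ := by
      ext φ; simp [Function.support, (hp_pos φ ψ).ne']
    rw [hsupp]
    simp [Measure.measure_univ_pos]
    exact (NeZero.ne _)
  have hq_meas : Measurable q := by
    have : Measurable fun ψ : EuclideanSpace ℝ (Fin n) => ∫ φ, p φ ψ :=
      (StronglyMeasurable.integral_prod_left (μ := volume) (f := p)
        hp_meas.stronglyMeasurable).measurable
    simpa [funext hq_def] using this
  set S : EuclideanSpace ℝ (Fin n) → EuclideanSpace ℝ (Fin n) :=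
    fun ψ => (q ψ)⁻¹ • ∫ φ, g φ ψ with hSdef
  have hS_meas : Measurable S := by
    have hG_meas : Measurable fun ψ : EuclideanSpace ℝ (Fin n) => ∫ φ, g φ ψ :=
      (StronglyMeasurable.integral_prod_left (μ := volume) (f := g)
        hg_meas.stronglyMeasurable).measurable
    exact (hq_meas.inv).smul hG_meas
  -- the vanishing cross term
  set G : EuclideanSpace ℝ (Fin m) × EuclideanSpace ℝ (Fin n) → ℝ :=
    fun x => (inner ℝ (s x.2 - S x.2) (S x.2 - (p x.1 x.2)⁻¹ • g x.1 x.2) : ℝ) with hGdef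
  have hpair : Measurable fun ω => (Φ ω, Ψ ω) := hΦ.prodMk hΨ
  have hG_meas : Measurable G :=
    ((hs_meas.comp measurable_snd).sub (hS_meas.comp measurable_snd)).inner
      ((hS_meas.comp measurable_snd).sub ((hp_meas.inv).smul hg_meas))
  have hGP_int : Integrable (fun ω => G (Φ ω, Ψ ω)) P := by
    have hbd : Integrable (fun ω => ‖s (Ψ ω)‖ ^ 2 + 2 * ‖S (Ψ ω)‖ ^ 2
        + ‖(p (Φ ω) (Ψ ω))⁻¹ • g (Φ ω) (Ψ ω)‖ ^ 2) P :=
      (hs_sq.add (hmarg_sq.const_mul 2)).add hjoint_sq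
    refine Integrable.mono' hbd ((hG_meas.comp hpair).aestronglyMeasurable) ?_
    filter_upwards with ω
    set a := s (Ψ ω); set b := S (Ψ ω); set c := (p (Φ ω) (Ψ ω))⁻¹ • g (Φ ω) (Ψ ω)
    have h1 : |(inner ℝ (a - b) (b - c) : ℝ)| ≤ ‖a - b‖ * ‖b - c‖ := abs_real_inner_le_norm _ _
    have h2 : ‖a - b‖ ≤ ‖a‖ + ‖b‖ := norm_sub_le _ _
    have h3 : ‖b - c‖ ≤ ‖b‖ + ‖c‖ := norm_sub_le _ _
    have h4 : ‖a - b‖ * ‖b - c‖ ≤ (‖a‖ + ‖b‖) * (‖b‖ + ‖c‖) :=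
      mul_le_mul h2 h3 (norm_nonneg _) (by positivity)
    have hG : G (Φ ω, Ψ ω) = (inner ℝ (a - b) (b - c) : ℝ) := rfl
    rw [Real.norm_eq_abs, hG]
    nlinarith [norm_nonneg a, norm_nonneg b, norm_nonneg c,
      sq_nonneg (‖a‖ + ‖b‖ - (‖b‖ + ‖c‖)), sq_nonneg (‖a‖ - ‖b‖), sq_nonneg (‖b‖ - ‖c‖)]
  have hmap : P.map (fun ω => (Φ ω, Ψ ω))
      = volume.withDensity fun x : EuclideanSpace ℝ (Fin m) × EuclideanSpace ℝ (Fin n) =>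
          ((p x.1 x.2).toNNReal : ℝ≥0∞) := hlaw
  have step1 : ∫ ω, G (Φ ω, Ψ ω) ∂P = ∫ x, G x ∂(P.map (fun ω => (Φ ω, Ψ ω))) :=
    (integral_map hpair.aemeasurable hG_meas.aestronglyMeasurable).symm
  have hGmap_int : Integrable G (P.map (fun ω => (Φ ω, Ψ ω))) :=
    (integrable_map_measure hG_meas.aestronglyMeasurable hpair.aemeasurable).mpr hGP_int
  have step2 : ∫ x, G x ∂(P.map (fun ω => (Φ ω, Ψ ω)))
      = ∫ x, ((p x.1 x.2).toNNReal : ℝ≥0) • G x ∂(volume) := by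
    rw [hmap]
    exact integral_withDensity_eq_integral_smul (hp_meas.real_toNNReal) G
  have hsmul_int : Integrable (fun x => ((p x.1 x.2).toNNReal : ℝ≥0) • G x) (volume) := by
    rw [hmap] at hGmap_int
    exact (integrable_withDensity_iff_integrable_smul (hp_meas.real_toNNReal)).mp hGmap_int
  have hptw : ∀ x : EuclideanSpace ℝ (Fin m) × EuclideanSpace ℝ (Fin n),
      ((p x.1 x.2).toNNReal : ℝ≥0) • G x
        = (inner ℝ (s x.2 - S x.2) (p x.1 x.2 • S x.2 - g x.1 x.2) : ℝ) := by
    intro x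
    have hp0 : (0:ℝ) < p x.1 x.2 := hp_pos x.1 x.2
    have h1 : ((p x.1 x.2).toNNReal : ℝ≥0) • G x = p x.1 x.2 * G x := by
      simp [NNReal.smul_def, Real.coe_toNNReal _ hp0.le]
    rw [h1, hGdef]
    rw [← real_inner_smul_right]
    congr 1
    rw [smul_sub, smul_inv_smul₀ hp0.ne']
  have hsmul_int' : Integrable
      (fun x : EuclideanSpace ℝ (Fin m) × EuclideanSpace ℝ (Fin n) =>
        (inner ℝ (s x.2 - S x.2) (p x.1 x.2 • S x.2 - g x.1 x.2) : ℝ)) (volume) := by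
    rw [← funext hptw]; exact hsmul_int
  have step3 : ∫ x : EuclideanSpace ℝ (Fin m) × EuclideanSpace ℝ (Fin n),
      (inner ℝ (s x.2 - S x.2) (p x.1 x.2 • S x.2 - g x.1 x.2) : ℝ) ∂(volume) = 0 := by
    rw [Measure.volume_eq_prod] at hsmul_int' ⊢
    rw [integral_prod_symm _ hsmul_int']
    have inner_zero : ∀ ψ : EuclideanSpace ℝ (Fin n),
        ∫ φ, (inner ℝ (s ψ - S ψ) (p φ ψ • S ψ - g φ ψ) : ℝ) = 0 := by
      intro ψ
      have hint : Integrable (fun φ => p φ ψ • S ψ - g φ ψ) volume :=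
        ((hp_int ψ).smul_const (S ψ)).sub (hg_int ψ)
      rw [integral_inner hint]
      have hzero : ∫ φ, (p φ ψ • S ψ - g φ ψ) = (0 : EuclideanSpace ℝ (Fin n)) := by
        rw [integral_sub ((hp_int ψ).smul_const (S ψ)) (hg_int ψ), integral_smul_const]
        rw [← hq_def ψ, hSdef]
        rw [smul_inv_smul₀ (hq_pos ψ).ne']
        simp
      rw [hzero, inner_zero_right]
    simp only [inner_zero, integral_zero]
  have hT : ∫ ω, (inner ℝ (s (Ψ ω) - S (Ψ ω))
      (S (Ψ ω) - (p (Φ ω) (Ψ ω))⁻¹ • g (Φ ω) (Ψ ω)) : ℝ) ∂P = 0 := by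
    calc ∫ ω, (inner ℝ (s (Ψ ω) - S (Ψ ω)) (S (Ψ ω) - (p (Φ ω) (Ψ ω))⁻¹ • g (Φ ω) (Ψ ω)) : ℝ) ∂P
        = ∫ ω, G (Φ ω, Ψ ω) ∂P := rfl
      _ = 0 := by rw [step1, step2, funext hptw, step3]
  -- apply the abstract Pythagoras lemma
  have hA : AEStronglyMeasurable (fun ω => s (Ψ ω)) P :=
    (hs_meas.comp hΨ).aestronglyMeasurable
  have hB : AEStronglyMeasurable (fun ω => S (Ψ ω)) P :=
    (hS_meas.comp hΨ).aestronglyMeasurable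
  have hC : AEStronglyMeasurable (fun ω => (p (Φ ω) (Ψ ω))⁻¹ • g (Φ ω) (Ψ ω)) P :=
    (((hp_meas.inv).smul hg_meas).comp hpair).aestronglyMeasurable
  obtain ⟨key1, key2, key3⟩ := pythagoras_aux P (fun ω => s (Ψ ω)) (fun ω => S (Ψ ω))
    (fun ω => (p (Φ ω) (Ψ ω))⁻¹ • g (Φ ω) (Ψ ω)) hA hB hC hs_sq hmarg_sq hjoint_sq hT
  have hae : ((fun ω => s (Ψ ω)) =ᵐ[P] fun ω => S (Ψ ω)) ↔ s =ᵐ[P.map Ψ] S := by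
    have hset : MeasurableSet {ψ : EuclideanSpace ℝ (Fin n) | s ψ = S ψ} :=
      measurableSet_eq_fun hs_meas hS_meas
    exact (ae_map_iff hΨ.aemeasurable hset).symm
  exact ⟨key1, key2, key3.trans hae⟩
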